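/- Let a > 0 and let c(1,k) be defined as in the Buckley–Osthus model recurrence (c(1,k) = c(1,k-1)(a+k-1)/(k+3a+1) + c(k)(a+k-1)/(k+3a+1), c(1,0)=0, with c(k)=B(k-1+a,a+2)/B(a,a+1)). Then c(1,k) = (Γ(2a+1)/Γ(a)) · k^{-(a+1)} · (1 + O(1/k)) as k → ∞. -/

import Mathlib

open Real

noncomputable def betaF (x y : ℝ) : ℝ := Real.Gamma x * Real.Gamma y / Real.Gamma (x + y)


-- log-convexity consequence
lemma gamma_combo {p q t : ℝ} (hp : 0 < p) (hq : 0 < q) (ht0 : 0 ≤ t) (ht1 : t ≤ 1) :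
    Real.Gamma (t * p + (1 - t) * q) ≤ Real.Gamma p ^ t * Real.Gamma q ^ (1 - t) := by
  have hcombo : 0 < t * p + (1 - t) * q := by
    rcases le_total p q with h | h
    · nlinarith [mul_le_mul_of_nonneg_left h (sub_nonneg.2 ht1)]
    · nlinarith [mul_le_mul_of_nonneg_left h ht0]
  have h := Real.convexOn_log_Gamma.2 (Set.mem_Ioi.2 hp) (Set.mem_Ioi.2 hq) ht0
    (sub_nonneg.2 ht1) (by ring)
  simp only [Function.comp_apply, smul_eq_mul] at h
  have hgp := Real.Gamma_pos_of_pos hp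
  have hgq := Real.Gamma_pos_of_pos hq
  have hgc := Real.Gamma_pos_of_pos hcombo
  rw [← Real.exp_log hgc]
  rw [Real.rpow_def_of_pos hgp, Real.rpow_def_of_pos hgq, ← Real.exp_add]
  exact Real.exp_le_exp.2 (by nlinarith [h])

lemma wendel_upper {x s : ℝ} (hx : 0 < x) (hs0 : 0 ≤ s) (hs1 : s ≤ 1) :
    Real.Gamma (x + s) ≤ Real.Gamma x * x ^ s := by
  have h := gamma_combo (p := x + 1) (q := x) (t := s) (by linarith) hx hs0 hs1
  rw [show s * (x + 1) + (1 - s) * x = x + s by ring] at h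
  rw [Real.Gamma_add_one hx.ne'] at h
  calc Real.Gamma (x + s) ≤ (x * Real.Gamma x) ^ s * Real.Gamma x ^ (1 - s) := h
    _ = Real.Gamma x * x ^ s := by
        rw [Real.mul_rpow hx.le (Real.Gamma_pos_of_pos hx).le, mul_assoc,
          ← Real.rpow_add (Real.Gamma_pos_of_pos hx), show s + (1 - s) = 1 by ring,
          Real.rpow_one, mul_comm]

lemma wendel_lower {x s : ℝ} (hx : 0 < x) (hs0 : 0 ≤ s) (hs1 : s ≤ 1) :
    x * Real.Gamma x ≤ (x + s) ^ (1 - s) * Real.Gamma (x + s) := by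
  have hxs : 0 < x + s := by linarith
  have h := gamma_combo (p := x + s) (q := x + s + 1) (t := s) hxs (by linarith) hs0 hs1
  rw [show s * (x + s) + (1 - s) * (x + s + 1) = x + 1 by ring] at h
  rw [show x + s + 1 = (x + s) + 1 by ring, Real.Gamma_add_one hxs.ne'] at h
  rw [show x + 1 = x + 1 by ring, Real.Gamma_add_one hx.ne'] at h
  calc x * Real.Gamma x ≤ Real.Gamma (x + s) ^ s * ((x + s) * Real.Gamma (x + s)) ^ (1 - s) := h
    _ = (x + s) ^ (1 - s) * Real.Gamma (x + s) := by
        rw [Real.mul_rpow hxs.le (Real.Gamma_pos_of_pos hxs).le]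
        rw [show Real.Gamma (x+s) ^ s * ((x+s) ^ (1-s) * Real.Gamma (x+s) ^ (1-s))
            = (x+s) ^ (1-s) * (Real.Gamma (x+s) ^ s * Real.Gamma (x+s) ^ (1-s)) by ring]
        rw [← Real.rpow_add (Real.Gamma_pos_of_pos hxs), show s + (1 - s) = 1 by ring,
          Real.rpow_one]

lemma recip_base {x s : ℝ} (hx : 1 ≤ x) (hs0 : 0 < s) (hs1 : s ≤ 1) :
    |Real.Gamma x * x ^ s / Real.Gamma (x + s) - 1| ≤ s / x := by
  have hx0 : (0:ℝ) < x := by linarith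
  have hxs : 0 < x + s := by linarith
  have hgx := Real.Gamma_pos_of_pos hx0
  have hgxs := Real.Gamma_pos_of_pos hxs
  have hxp : (0:ℝ) < x ^ s := Real.rpow_pos_of_pos hx0 _
  have hQ1 : 1 ≤ Real.Gamma x * x ^ s / Real.Gamma (x + s) := by
    rw [le_div_iff₀ hgxs, one_mul]
    exact wendel_upper hx0 hs0.le hs1
  have hQ2 : Real.Gamma x * x ^ s / Real.Gamma (x + s) ≤ (x + s) / x := by
    have h1 := wendel_lower hx0 hs0.le hs1
    -- Γx ≤ (x+s)^(1-s) Γ(x+s) / x ; then times x^s/Γ(x+s)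
    have hxs1 : x ^ s ≤ (x + s) ^ s :=
      Real.rpow_le_rpow hx0.le (by linarith) hs0.le
    have key : Real.Gamma x * x ^ s * x ≤ (x + s) * Real.Gamma (x + s) := by
      calc Real.Gamma x * x ^ s * x = (x * Real.Gamma x) * x ^ s := by ring
        _ ≤ ((x + s) ^ (1 - s) * Real.Gamma (x + s)) * (x + s) ^ s := by
            apply mul_le_mul h1 hxs1 hxp.le
            positivity
        _ = ((x + s) ^ (1 - s) * (x + s) ^ s) * Real.Gamma (x + s) := by ring
        _ = (x + s) * Real.Gamma (x + s) := by
            rw [← Real.rpow_add hxs, show 1 - s + s = 1 by ring, Real.rpow_one]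
    rw [div_le_div_iff₀ hgxs hx0]
    linarith [key]
  rw [abs_le]
  constructor
  · have : 0 ≤ s / x := by positivity
    linarith
  · have : (x + s) / x = 1 + s / x := by field_simp
    linarith [hQ2, this ▸ hQ2]

lemma recip_asym (s : ℝ) (hs : 0 < s) :
    ∃ C > 0, ∀ x : ℝ, 1 ≤ x →
      |Real.Gamma x * x ^ s / Real.Gamma (x + s) - 1| ≤ C / x := by
  suffices H : ∀ n : ℕ, ∀ s : ℝ, 0 < s → s ≤ n → ∃ C > 0, ∀ x : ℝ, 1 ≤ x →
      |Real.Gamma x * x ^ s / Real.Gamma (x + s) - 1| ≤ C / x by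
    exact H ⌈s⌉₊ s hs (Nat.le_ceil s)
  intro n
  induction n with
  | zero => intro s hs hsn; norm_num at hsn; linarith
  | succ n ih =>
    intro s hs hsn
    by_cases h1 : s ≤ 1
    · exact ⟨s, hs, fun x hx => recip_base hx hs h1⟩
    · push_neg at h1
      obtain ⟨C, hC, hb⟩ := ih (s - 1) (by linarith) (by push_cast at hsn ⊢; linarith)
      refine ⟨C + s, by linarith, fun x hx => ?_⟩
      have hx0 : (0:ℝ) < x := by linarith
      have hxs1 : (0:ℝ) < x + s - 1 := by linarith
      have hg1 := Real.Gamma_pos_of_pos (show (0:ℝ) < x + (s-1) by linarith)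
      have key : Real.Gamma x * x ^ s / Real.Gamma (x + s)
          = (Real.Gamma x * x ^ (s - 1) / Real.Gamma (x + (s - 1))) * (x / (x + s - 1)) := by
        have hΓ : Real.Gamma (x + s) = (x + s - 1) * Real.Gamma (x + (s - 1)) := by
          rw [show x + s = (x + (s - 1)) + 1 by ring,
            Real.Gamma_add_one (show x + (s-1) ≠ 0 by intro h; nlinarith)]
          ring_nf
        have hxp : x ^ s = x ^ (s - 1) * x := by
          rw [← Real.rpow_add_one hx0.ne' (s - 1)]; ring_nf
        rw [hΓ, hxp]
        field_simp
      rw [key]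
      have hQ := hb x hx
      set Q := Real.Gamma x * x ^ (s - 1) / Real.Gamma (x + (s - 1)) with hQdef
      have ht0 : 0 < x / (x + s - 1) := by positivity
      have ht1 : x / (x + s - 1) ≤ 1 := by
        rw [div_le_one hxs1]; linarith
      have ht2 : 1 - x / (x + s - 1) ≤ (s - 1) / x := by
        have h' : 1 - x / (x + s - 1) = (s - 1) / (x + s - 1) := by field_simp; ring
        rw [h', div_le_div_iff₀ hxs1 hx0]
        nlinarith
      have expand : Q * (x / (x + s - 1)) - 1
          = (Q - 1) * (x / (x + s - 1)) + (x / (x + s - 1) - 1) := by ring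
      rw [expand]
      calc |(Q - 1) * (x / (x + s - 1)) + (x / (x + s - 1) - 1)|
          ≤ |(Q - 1) * (x / (x + s - 1))| + |x / (x + s - 1) - 1| := abs_add_le _ _
        _ ≤ |Q - 1| * 1 + (s - 1) / x := by
            have hh1 : |(Q - 1) * (x / (x + s - 1))| ≤ |Q - 1| * 1 := by
              rw [abs_mul]
              exact mul_le_mul_of_nonneg_left (by rw [abs_of_pos ht0]; exact ht1) (abs_nonneg _)
            have hh2 : |x / (x + s - 1) - 1| ≤ (s - 1) / x := by
              have hnp : x / (x + s - 1) - 1 ≤ 0 := by linarith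
              rw [abs_of_nonpos hnp]
              linarith
            linarith
        _ ≤ C / x + (s - 1) / x := by rw [mul_one]; gcongr
        _ ≤ (C + s) / x := by rw [← add_div, div_le_div_iff₀ hx0 hx0]; nlinarith

lemma closed_form (a : ℝ) (ha : 0 < a) (c1 : ℕ → ℝ)
    (h0 : c1 0 = 0)
    (hrec : ∀ k : ℕ, 1 ≤ k →
      c1 k = c1 (k - 1) * ((a + (k : ℝ) - 1) / ((k : ℝ) + 3 * a + 1)) +
        (betaF ((k : ℝ) - 1 + a) (a + 2) / betaF a (a + 1)) *
          ((a + (k : ℝ) - 1) / ((k : ℝ) + 3 * a + 1))) :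
    ∀ k : ℕ, c1 k =
      Real.Gamma (2 * a + 1) / Real.Gamma a *
        (Real.Gamma ((k : ℝ) + a) / Real.Gamma ((k : ℝ) + 2 * a + 1)) -
      Real.Gamma (3 * a + 2) / Real.Gamma a *
        (Real.Gamma ((k : ℝ) + a) / Real.Gamma ((k : ℝ) + 3 * a + 2)) := by
  have hΓa := Real.Gamma_pos_of_pos ha
  have hΓ2a := Real.Gamma_pos_of_pos (show (0:ℝ) < 2*a+1 by linarith)
  have hΓ3a := Real.Gamma_pos_of_pos (show (0:ℝ) < 3*a+2 by linarith)
  intro k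
  induction k with
  | zero =>
    simp only [Nat.cast_zero, h0, zero_add]
    field_simp
    ring
  | succ m ih =>
    have hr := hrec (m + 1) (Nat.le_add_left 1 m)
    simp only [Nat.add_sub_cancel, Nat.cast_add, Nat.cast_one] at hr
    set x : ℝ := (m : ℝ) with hxdef
    have hx0 : (0 : ℝ) ≤ x := Nat.cast_nonneg m
    -- positivity of all gamma arguments
    have p1 : (0:ℝ) < x + a := by linarith
    have p2 : (0:ℝ) < x + 2*a + 1 := by linarith
    have p3 : (0:ℝ) < x + 3*a + 2 := by linarith
    have g1 := Real.Gamma_pos_of_pos p1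
    have g2 := Real.Gamma_pos_of_pos p2
    have g3 := Real.Gamma_pos_of_pos p3
    -- rewrite betaF terms in hr
    rw [show x + 1 - 1 + a = x + a by ring] at hr
    simp only [betaF] at hr
    rw [show x + a + (a + 2) = (x + 2*a + 1) + 1 by ring,
      Real.Gamma_add_one p2.ne',
      show a + (a + 1) = 2*a + 1 by ring,
      show a + 2 = (a+1) + 1 by ring,
      Real.Gamma_add_one (show a + 1 ≠ 0 by linarith),
      Real.Gamma_add_one ha.ne', ih] at hr
    -- rewrite goal gammas
    push_cast
    rw [show x + 1 + a = (x + a) + 1 by ring, Real.Gamma_add_one p1.ne',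
      show x + 1 + 2*a + 1 = (x + 2*a + 1) + 1 by ring, Real.Gamma_add_one p2.ne',
      show x + 1 + 3*a + 2 = (x + 3*a + 2) + 1 by ring, Real.Gamma_add_one p3.ne',
      hr]
    have q1 : x + 1 + 3*a + 1 = x + 3*a + 2 := by ring
    rw [q1]
    field_simp
    ring

set_option maxHeartbeats 1000000 in
theorem c1k_asymptotic (a : ℝ) (ha : 0 < a) (c1 : ℕ → ℝ)
    (h0 : c1 0 = 0)
    (hrec : ∀ k : ℕ, 1 ≤ k →
      c1 k = c1 (k - 1) * ((a + (k : ℝ) - 1) / ((k : ℝ) + 3 * a + 1)) +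
        (betaF ((k : ℝ) - 1 + a) (a + 2) / betaF a (a + 1)) *
          ((a + (k : ℝ) - 1) / ((k : ℝ) + 3 * a + 1))) :
    ∃ C > 0, ∀ k : ℕ, 1 ≤ k →
      |c1 k - Real.Gamma (2 * a + 1) / Real.Gamma a * (k : ℝ) ^ (-(a + 1))| ≤
        C * (k : ℝ) ^ (-(a + 1)) / (k : ℝ) := by
  obtain ⟨C1, hC1, hb1⟩ := recip_asym (a + 1) (by linarith)
  obtain ⟨C2, hC2, hb2⟩ := recip_asym (2 * a + 2) (by linarith)
  have hΓa := Real.Gamma_pos_of_pos ha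
  have hApos : 0 < Real.Gamma (2 * a + 1) / Real.Gamma a :=
    div_pos (Real.Gamma_pos_of_pos (by linarith)) hΓa
  have hBpos : 0 < Real.Gamma (3 * a + 2) / Real.Gamma a :=
    div_pos (Real.Gamma_pos_of_pos (by linarith)) hΓa
  set A := Real.Gamma (2 * a + 1) / Real.Gamma a with hAdef
  set B := Real.Gamma (3 * a + 2) / Real.Gamma a with hBdef
  refine ⟨A * (C1 + a * (a + 1)) + B * (1 + C2), by positivity, ?_⟩
  intro k hk
  have hcf := closed_form a ha c1 h0 hrec k
  set x : ℝ := (k : ℝ) with hxdef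
  have hx1 : (1 : ℝ) ≤ x := by rw [hxdef]; exact_mod_cast hk
  have hx0 : (0 : ℝ) < x := by linarith
  have hy1 : (1 : ℝ) ≤ x + a := by linarith
  have hy0 : (0 : ℝ) < x + a := by linarith
  have gv : (0:ℝ) < x ^ (-(a+1)) := Real.rpow_pos_of_pos hx0 _
  have g1 := Real.Gamma_pos_of_pos hy0
  have g2 := Real.Gamma_pos_of_pos (show (0:ℝ) < x + 2*a+1 by linarith)
  have g3 := Real.Gamma_pos_of_pos (show (0:ℝ) < x + 3*a+2 by linarith)
  -- first ratio
  have h1 := hb1 (x + a) hy1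
  rw [show x + a + (a + 1) = x + 2*a + 1 by ring] at h1
  have h2 := hb2 (x + a) hy1
  rw [show x + a + (2*a + 2) = x + 3*a + 2 by ring] at h2
  set δ₁ := Real.Gamma (x+a) * (x+a) ^ (a+1) / Real.Gamma (x+2*a+1) - 1 with hd1
  set δ₂ := Real.Gamma (x+a) * (x+a) ^ (2*a+2) / Real.Gamma (x+3*a+2) - 1 with hd2
  have hδ1 : |δ₁| ≤ C1 / x := by
    refine h1.trans ?_
    apply div_le_div_of_nonneg_left hC1.le hx0; linarith
  have hδ2 : |δ₂| ≤ C2 / x := by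
    refine h2.trans ?_
    apply div_le_div_of_nonneg_left hC2.le hx0; linarith
  have hδ1' : |δ₁| ≤ C1 := hδ1.trans (by rw [div_le_iff₀ hx0]; nlinarith)
  have hδ2' : |δ₂| ≤ C2 := hδ2.trans (by rw [div_le_iff₀ hx0]; nlinarith)
  -- G = (1+δ₁) * (x+a)^(-(a+1))
  have hrp1 : (x+a) ^ (a+1) * (x+a) ^ (-(a+1)) = 1 := by
    rw [← Real.rpow_add hy0, show a+1 + -(a+1) = (0:ℝ) by ring, Real.rpow_zero]
  have hG : Real.Gamma (x+a) / Real.Gamma (x+2*a+1) = (1 + δ₁) * (x+a) ^ (-(a+1)) := by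
    have h' : (1 + δ₁) = Real.Gamma (x+a) * (x+a) ^ (a+1) / Real.Gamma (x+2*a+1) := by
      rw [hd1]; ring
    rw [h', div_mul_eq_mul_div, mul_assoc, hrp1, mul_one]
  have hrp2 : (x+a) ^ (2*a+2) * (x+a) ^ (-(2*a+2)) = 1 := by
    rw [← Real.rpow_add hy0, show 2*a+2 + -(2*a+2) = (0:ℝ) by ring, Real.rpow_zero]
  have hH : Real.Gamma (x+a) / Real.Gamma (x+3*a+2) = (1 + δ₂) * (x+a) ^ (-(2*a+2)) := by
    have h' : (1 + δ₂) = Real.Gamma (x+a) * (x+a) ^ (2*a+2) / Real.Gamma (x+3*a+2) := by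
      rw [hd2]; ring
    rw [h', div_mul_eq_mul_div, mul_assoc, hrp2, mul_one]
  -- w = (x/(x+a))^(a+1) and relation u = v * w
  have hw0 : (0:ℝ) < x / (x+a) := by positivity
  have hw1 : x / (x+a) ≤ 1 := by rw [div_le_one hy0]; linarith
  set w := (x / (x+a)) ^ (a+1) with hwdef
  have hwle : w ≤ 1 := Real.rpow_le_one hw0.le hw1 (by linarith)
  have hwge : 1 - a*(a+1)/x ≤ w := by
    have hq1 : a / (x+a) ≤ 1 := by rw [div_le_one hy0]; linarith
    have hber := one_add_mul_self_le_rpow_one_add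
      (s := -(a/(x+a))) (p := a+1) (by linarith) (by linarith)
    have hxw : 1 + -(a/(x+a)) = x/(x+a) := by field_simp; ring
    rw [hxw] at hber
    have hq2 : a/(x+a) ≤ a/x := by
      apply div_le_div_of_nonneg_left ha.le hx0; linarith
    have hq3 : (a+1) * (a/(x+a)) ≤ (a+1) * (a/x) :=
      mul_le_mul_of_nonneg_left hq2 (by linarith)
    have hq4 : (a+1) * (a/x) = a*(a+1)/x := by ring
    have : 1 - a*(a+1)/x ≤ 1 + (a+1) * -(a/(x+a)) := by linarith
    exact this.trans hber
  have huv : (x+a) ^ (-(a+1)) = x ^ (-(a+1)) * w := by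
    rw [hwdef, Real.div_rpow hx0.le hy0.le, Real.rpow_neg hx0.le, Real.rpow_neg hy0.le]
    field_simp
  -- bound term1 : |G - x^{-(a+1)}|
  have hterm1 : |Real.Gamma (x+a) / Real.Gamma (x+2*a+1) - x ^ (-(a+1))|
      ≤ (C1 + a*(a+1)) / x * x ^ (-(a+1)) := by
    rw [hG, huv]
    have expand : (1 + δ₁) * (x ^ (-(a+1)) * w) - x ^ (-(a+1))
        = (δ₁ * w + (w - 1)) * x ^ (-(a+1)) := by ring
    rw [expand, abs_mul, abs_of_pos gv]
    apply mul_le_mul_of_nonneg_right _ gv.le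
    calc |δ₁ * w + (w - 1)| ≤ |δ₁ * w| + |w - 1| := abs_add_le _ _
      _ ≤ C1 / x + a*(a+1)/x := by
          have e1 : |δ₁ * w| ≤ C1 / x := by
            have hwpos : 0 < w := Real.rpow_pos_of_pos hw0 _
            rw [abs_mul, abs_of_pos hwpos]
            calc |δ₁| * w ≤ (C1/x) * 1 :=
                  mul_le_mul hδ1 hwle hwpos.le (by positivity)
              _ = C1 / x := mul_one _
          have e2 : |w - 1| ≤ a*(a+1)/x := by
            rw [abs_of_nonpos (by linarith)]; linarith
          linarith
      _ = (C1 + a*(a+1)) / x := by ring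
  -- bound term2 : H ≤ (1+C2)/x * x^{-(a+1)}
  have habs2 : -(C2) ≤ δ₂ ∧ δ₂ ≤ C2 := abs_le.mp hδ2'
  have hHpos : 0 < Real.Gamma (x+a) / Real.Gamma (x+3*a+2) := by positivity
  have hterm2 : Real.Gamma (x+a) / Real.Gamma (x+3*a+2) ≤ (1 + C2) / x * x ^ (-(a+1)) := by
    rw [hH]
    have m1 : (x+a) ^ (-(2*a+2)) ≤ x ^ (-(2*a+2)) := by
      rw [Real.rpow_neg hx0.le, Real.rpow_neg hy0.le]
      apply inv_anti₀ (Real.rpow_pos_of_pos hx0 _)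
      apply Real.rpow_le_rpow hx0.le (by linarith) (by linarith)
    have m2 : x ^ (-(2*a+2)) = x ^ (-(a+1)) * x ^ (-(a+1)) := by
      rw [← Real.rpow_add hx0]; ring_nf
    have m3 : x ^ (-(a+1)) ≤ x ^ (-(1:ℝ)) :=
      Real.rpow_le_rpow_of_exponent_le hx1 (by linarith)
    have m4 : x ^ (-(1:ℝ)) = 1/x := by
      rw [Real.rpow_neg hx0.le, Real.rpow_one]; exact (one_div x).symm
    calc (1 + δ₂) * (x+a) ^ (-(2*a+2)) ≤ (1 + C2) * x ^ (-(2*a+2)) := by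
          apply mul_le_mul (by linarith [habs2.2]) m1 (by positivity) (by linarith)
      _ = (1 + C2) * (x ^ (-(a+1)) * x ^ (-(a+1))) := by rw [m2]
      _ ≤ (1 + C2) * (x ^ (-(a+1)) * (1/x)) := by
          apply mul_le_mul_of_nonneg_left _ (by linarith)
          apply mul_le_mul_of_nonneg_left (m4 ▸ m3) gv.le
      _ = (1 + C2) / x * x ^ (-(a+1)) := by ring
  -- assemble
  rw [hcf]
  rw [show A * (Real.Gamma (x+a) / Real.Gamma (x+2*a+1)) - B * (Real.Gamma (x+a) / Real.Gamma (x+3*a+2))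
      - A * x ^ (-(a+1))
      = A * (Real.Gamma (x+a) / Real.Gamma (x+2*a+1) - x ^ (-(a+1)))
        - B * (Real.Gamma (x+a) / Real.Gamma (x+3*a+2)) by ring]
  calc |A * (Real.Gamma (x+a) / Real.Gamma (x+2*a+1) - x ^ (-(a+1)))
        - B * (Real.Gamma (x+a) / Real.Gamma (x+3*a+2))|
      ≤ |A * (Real.Gamma (x+a) / Real.Gamma (x+2*a+1) - x ^ (-(a+1)))|
        + |B * (Real.Gamma (x+a) / Real.Gamma (x+3*a+2))| := abs_sub _ _
    _ ≤ A * ((C1 + a*(a+1)) / x * x ^ (-(a+1))) + B * ((1 + C2) / x * x ^ (-(a+1))) := by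
        rw [abs_mul, abs_mul, abs_of_pos hApos, abs_of_pos hBpos,
          abs_of_pos hHpos]
        gcongr
    _ = (A * (C1 + a*(a+1)) + B * (1 + C2)) * x ^ (-(a+1)) / x := by ring
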